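/- arXiv:1708.09205 — 7 statements merged into one kernel-verified Lean document; each statement's English description precedes it below -/
import Mathlib

section
/- The modular group SL₂(ℤ) is isomorphic to the abstract group generated by two elements s and t subject to the relations s⁴ = 1 and (ts)³ = s², via s ↦ [[0,-1],[1,0]] and t ↦ [[1,1],[0,1]]. -/
/-- The relations of the presentation: generators `s, t` (indexed by `Bool`, `true ↦ s`,
`false ↦ t`) subject to `s⁴ = 1` and `(t*s)³ = s²`, i.e. `(t*s)³ * s⁻² = 1`. -/
def sl2Rels : Set (FreeGroup Bool) :=
  {FreeGroup.of true ^ 4, (FreeGroup.of false * FreeGroup.of true) ^ 3 * (FreeGroup.of true ^ 2)⁻¹}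

namespace SL2Aux

open Matrix.SpecialLinearGroup Matrix ModularGroup

abbrev G := PresentedGroup sl2Rels

abbrev s : G := PresentedGroup.of true
abbrev t : G := PresentedGroup.of false

abbrev SL2Z := Matrix.SpecialLinearGroup (Fin 2) ℤ

/-! ### Matrix facts -/

lemma S_pow_four : (S : SL2Z) ^ 4 = 1 := by
  ext i j; fin_cases i <;> fin_cases j <;> decide

lemma TS_cube : (T * S : SL2Z) ^ 3 = S ^ 2 := by
  ext i j; fin_cases i <;> fin_cases j <;> decide

lemma S_sq : (S : SL2Z) ^ 2 = -1 := by
  ext i j; fin_cases i <;> fin_cases j <;> decide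

lemma S_sq_ne_one : (S : SL2Z) ^ 2 ≠ 1 := by
  rw [S_sq]
  intro h
  have := congrFun (congrFun (congrArg (Subtype.val) h) 0) 0
  simp at this

/-! ### The homomorphism `Φ : G →* SL2Z` -/

def fgen : Bool → SL2Z := fun b => cond b S T

lemma rels_hold : ∀ r ∈ sl2Rels, FreeGroup.lift fgen r = 1 := by
  intro r hr
  rcases hr with h | h
  · subst h
    simp [fgen, S_pow_four]
  · simp only [Set.mem_singleton_iff] at h
    subst h
    simp only [_root_.map_mul, map_pow, map_inv, FreeGroup.lift_apply_of, fgen, cond]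
    rw [TS_cube]
    group

def Phi : G →* SL2Z := PresentedGroup.toGroup rels_hold

@[simp] lemma Phi_s : Phi s = S := PresentedGroup.toGroup.of rels_hold
@[simp] lemma Phi_t : Phi t = T := PresentedGroup.toGroup.of rels_hold

/-! ### Relations in `G` -/

lemma rel_one {r : FreeGroup Bool} (h : r ∈ sl2Rels) : PresentedGroup.mk sl2Rels r = 1 :=
  (QuotientGroup.eq_one_iff r).mpr (Subgroup.subset_normalClosure h)

lemma s_pow_four : s ^ 4 = 1 := by
  have := rel_one (r := FreeGroup.of true ^ 4) (Or.inl rfl)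
  simpa [PresentedGroup.of, map_pow] using this

lemma ts_cube : (t * s) ^ 3 = s ^ 2 := by
  have := rel_one (r := (FreeGroup.of false * FreeGroup.of true) ^ 3 * (FreeGroup.of true ^ 2)⁻¹)
    (Or.inr rfl)
  simp only [_root_.map_mul, map_pow, map_inv] at this
  rw [_root_.mul_inv_eq_one] at this
  simpa [PresentedGroup.of] using this

lemma s_sq_comm_t : s ^ 2 * t = t * s ^ 2 := by
  have h1 : s ^ 2 * (t * s) = (t * s) * s ^ 2 := by
    rw [← ts_cube, ← pow_succ, ← pow_succ']
  have h2 : s ^ 2 * (t * s) * s⁻¹ = (t * s) * s ^ 2 * s⁻¹ := by rw [h1]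
  calc s ^ 2 * t = s ^ 2 * (t * s) * s⁻¹ := by group
    _ = (t * s) * s ^ 2 * s⁻¹ := h2
    _ = t * s ^ 2 := by group

/-! ### Surjectivity -/

lemma det_entries (M : SL2Z) : M.1 0 0 * M.1 1 1 - M.1 0 1 * M.1 1 0 = 1 := by
  have := M.2
  rwa [Matrix.det_fin_two] at this

lemma coe_S_inv : ((S⁻¹ : SL2Z) : Matrix (Fin 2) (Fin 2) ℤ) = !![0, 1; -1, 0] := by
  rw [SL2_inv_expl]
  ext i j
  fin_cases i <;> fin_cases j <;> simp [coe_S]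

lemma base1 (M : SL2Z) (hc : M.1 1 0 = 0) (ha : M.1 0 0 = 1) (hd : M.1 1 1 = 1) :
    M = T ^ (M.1 0 1) := by
  ext i j
  rw [coe_T_zpow]
  fin_cases i <;> fin_cases j <;> simp [ha, hc, hd]

lemma base2 (M : SL2Z) (hc : M.1 1 0 = 0) (ha : M.1 0 0 = -1) (hd : M.1 1 1 = -1) :
    M = S ^ 2 * T ^ (-(M.1 0 1)) := by
  ext i j
  rw [coe_mul, S_sq, coe_neg, coe_T_zpow]
  fin_cases i <;> fin_cases j <;> simp [ha, hc, hd, Matrix.neg_mul]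

lemma M2_lower_left (q : ℤ) (M : SL2Z) :
    (S⁻¹ * T ^ (-q) * M).1 1 0 = q * M.1 1 0 - M.1 0 0 := by
  rw [coe_mul, coe_mul, coe_S_inv, coe_T_zpow]
  simp [Matrix.mul_apply, Fin.sum_univ_succ]
  ring

lemma surj_aux : ∀ n : ℕ, ∀ M : SL2Z, (M.1 1 0).natAbs < n → ∃ g : G, Phi g = M := by
  intro n
  induction n with
  | zero => exact fun M h => absurd h (Nat.not_lt_zero _)
  | succ n ih =>
    intro M hM
    by_cases hc : M.1 1 0 = 0
    · have hdet : M.1 0 0 * M.1 1 1 = 1 := by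
        have := det_entries M; rw [hc] at this; linarith
      rcases Int.mul_eq_one_iff_eq_one_or_neg_one.mp hdet with ⟨ha, hd⟩ | ⟨ha, hd⟩
      · refine ⟨t ^ (M.1 0 1), ?_⟩
        rw [map_zpow, Phi_t]
        exact (base1 M hc ha hd).symm
      · refine ⟨s ^ 2 * t ^ (-(M.1 0 1)), ?_⟩
        rw [_root_.map_mul, map_zpow, map_pow, Phi_t, Phi_s]
        exact (base2 M hc ha hd).symm
    · set q : ℤ := M.1 0 0 / M.1 1 0 with hq
      set M₂ : SL2Z := S⁻¹ * T ^ (-q) * M with hM₂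
      have h20 : M₂.1 1 0 = q * M.1 1 0 - M.1 0 0 := M2_lower_left q M
      have hmod : q * M.1 1 0 - M.1 0 0 = -(M.1 0 0 % M.1 1 0) := by
        have h := Int.mul_ediv_add_emod (M.1 0 0) (M.1 1 0)
        rw [hq, mul_comm]
        linarith
      have hlt : (M₂.1 1 0).natAbs < n := by
        rw [h20, hmod]
        have h1 : 0 ≤ M.1 0 0 % M.1 1 0 := Int.emod_nonneg _ hc
        have h2 : M.1 0 0 % M.1 1 0 < ((M.1 1 0).natAbs : ℤ) := by
          have := Int.emod_lt (M.1 0 0) hc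
          exact this
        generalize hr : M.1 0 0 % M.1 1 0 = r at h1 h2
        omega
      obtain ⟨g₂, hg₂⟩ := ih M₂ hlt
      refine ⟨t ^ q * s * g₂, ?_⟩
      rw [_root_.map_mul, _root_.map_mul, map_zpow, Phi_t, Phi_s, hg₂, hM₂]
      group

lemma Phi_surjective : Function.Surjective Phi := fun M =>
  surj_aux ((M.1 1 0).natAbs + 1) M (Nat.lt_succ_self _)

/-! ### A cyclic-group homomorphism builder -/

def zmodMulHom {Γ : Type*} [Group Γ] (n : ℕ) (x : Γ) (h : x ^ n = 1) :
    Multiplicative (ZMod n) →* Γ :=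
  AddMonoidHom.toMultiplicativeLeft
    (ZMod.lift n ⟨(zmultiplesHom (Additive Γ)) (Additive.ofMul x), by
      have : Additive.ofMul (x ^ (n : ℤ)) = (0 : Additive Γ) := by
        rw [zpow_natCast, h]; rfl
      simpa [zmultiplesHom] using this⟩)

lemma zmodMulHom_int {Γ : Type*} [Group Γ] (n : ℕ) (x : Γ) (h : x ^ n = 1) (k : ℤ) :
    zmodMulHom n x h (Multiplicative.ofAdd ((k : ℤ) : ZMod n)) = x ^ k := by
  unfold zmodMulHom
  rw [AddMonoidHom.coe_toMultiplicativeLeft]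
  simp only [Function.comp_apply, toAdd_ofAdd]
  rw [ZMod.lift_coe]
  simp [zmultiplesHom]

/-! ### Injectivity: setup of the free product -/

def Hfam : Bool → Type := fun b => Multiplicative (ZMod (cond b 2 3))

instance (b : Bool) : Group (Hfam b) := by
  cases b <;> exact inferInstanceAs (Group (Multiplicative (ZMod _)))

noncomputable abbrev ρ : SL2Z →* Equiv.Perm UpperHalfPlane :=
  MulAction.toPermHom SL2Z UpperHalfPlane

open UpperHalfPlane in
lemma smul_S_S (z : UpperHalfPlane) : S • S • z = z := by
  rw [modular_S_smul, modular_S_smul]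
  ext
  rw [coe_mk, coe_mk]
  have hz : (z : ℂ) ≠ 0 := z.ne_zero
  field_simp

lemma rho_S_sq : (ρ S) ^ 2 = 1 := by
  rw [← _root_.map_pow]
  apply Equiv.ext
  intro z
  have h : (S ^ 2 : SL2Z) • z = z := by
    rw [pow_two, mul_smul]; exact smul_S_S z
  simpa using h

lemma rho_TS_cube : (ρ (T * S)) ^ 3 = 1 := by
  rw [← _root_.map_pow, TS_cube, _root_.map_pow]
  exact rho_S_sq

noncomputable def ff : ∀ b, Hfam b →* Equiv.Perm UpperHalfPlane := fun b =>
  match b with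
  | true => zmodMulHom 2 (ρ S) rho_S_sq
  | false => zmodMulHom 3 (ρ (T * S)) rho_TS_cube

noncomputable def XX : Bool → Set UpperHalfPlane := fun b =>
  cond b {z | z.re < 0} {z | 0 < z.re}

open UpperHalfPlane in
lemma re_S_smul (z : ℍ) : (S • z).re = -z.re / Complex.normSq z := by
  rw [modular_S_smul]
  show ((-(z : ℂ))⁻¹).re = _
  rw [Complex.inv_re, Complex.normSq_neg, Complex.neg_re]
  rfl

open UpperHalfPlane in
lemma re_TS_smul (z : ℍ) : ((T * S) • z).re = 1 + -z.re / Complex.normSq z := by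
  rw [mul_smul, modular_T_smul, UpperHalfPlane.vadd_re, re_S_smul]

open UpperHalfPlane in
lemma La {z : ℍ} (hz : z.re < 0) : 1 < ((T * S) • z).re := by
  rw [re_TS_smul]
  have h1 : 0 < Complex.normSq (z : ℂ) := z.normSq_pos
  have : 0 < -z.re / Complex.normSq (z : ℂ) := div_pos (by linarith) h1
  linarith

open UpperHalfPlane in
lemma Lb {z : ℍ} (hz : 1 < z.re) : 0 < ((T * S) • z).re := by
  rw [re_TS_smul]
  have h1 : 0 < Complex.normSq (z : ℂ) := z.normSq_pos
  have h2 : z.re < Complex.normSq (z : ℂ) := by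
    have : Complex.normSq (z : ℂ) = z.re * z.re + z.im * z.im := Complex.normSq_apply z
    nlinarith [z.2, mul_self_nonneg (UpperHalfPlane.im z)]
  have : -z.re / Complex.normSq (z : ℂ) > -1 := by
    rw [gt_iff_lt, neg_lt, ← neg_div, neg_neg, div_lt_one h1]
    exact h2
  linarith

open UpperHalfPlane in
lemma Lc {z : ℍ} (hz : 0 < z.re) : (S • z).re < 0 := by
  rw [re_S_smul]
  have h1 : 0 < Complex.normSq (z : ℂ) := z.normSq_pos
  exact div_neg_of_neg_of_pos (by linarith) h1

lemma liftff_injective : Function.Injective (Monoid.CoprodI.lift ff) := by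
  apply Monoid.CoprodI.lift_injective_of_ping_pong ff ?hcard XX ?hne ?hdisj ?hpp
  case hcard =>
    right
    refine ⟨false, le_of_eq ?_⟩
    have : Cardinal.mk (Hfam false) = Cardinal.mk (Fin 3) := rfl
    rw [this, Cardinal.mk_fin]
    norm_num
  case hne =>
    intro b
    cases b
    · refine ⟨(1 : ℝ) +ᵥ UpperHalfPlane.I, ?_⟩
      show 0 < ((1 : ℝ) +ᵥ UpperHalfPlane.I).re
      rw [UpperHalfPlane.vadd_re, UpperHalfPlane.I_re]
      norm_num
    · refine ⟨(-1 : ℝ) +ᵥ UpperHalfPlane.I, ?_⟩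
      show ((-1 : ℝ) +ᵥ UpperHalfPlane.I).re < 0
      rw [UpperHalfPlane.vadd_re, UpperHalfPlane.I_re]
      norm_num
  case hdisj =>
    have key : Disjoint (XX true) (XX false) := by
      rw [Set.disjoint_left]
      intro z h1 h2
      have hz1 : z.re < 0 := h1
      have hz2 : 0 < z.re := h2
      linarith
    intro i j hij
    cases i <;> cases j
    · simp at hij
    · exact key.symm
    · exact key
    · simp at hij
  case hpp =>
    have rho_smul : ∀ (g : SL2Z) (z : UpperHalfPlane), ρ g • z = g • z := fun _ _ => rfl
    intro i j hij
    cases i <;> cases j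
    · simp at hij
    · -- i = false, j = true
      have henum : ∀ h : Multiplicative (ZMod 3), h ≠ 1 →
          h = Multiplicative.ofAdd ((1 : ℤ) : ZMod 3) ∨
          h = Multiplicative.ofAdd ((2 : ℤ) : ZMod 3) := by decide
      intro h hne
      have hff : ff false h = ρ (T * S) ^ (1 : ℤ) ∨ ff false h = ρ (T * S) ^ (2 : ℤ) := by
        rcases henum h hne with h1 | h1
        · left; rw [show h = _ from h1]; exact zmodMulHom_int 3 _ rho_TS_cube 1
        · right; rw [show h = _ from h1]; exact zmodMulHom_int 3 _ rho_TS_cube 2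
      rintro w ⟨z, hz, rfl⟩
      have hzre : z.re < 0 := hz
      show ((ff false h) • z) ∈ XX false
      have e1 : (ρ (T * S) ^ (1 : ℤ)) • z = (T * S) • z := by
        rw [zpow_one, rho_smul]
      have e2 : (ρ (T * S) ^ (2 : ℤ)) • z = (T * S) • ((T * S) • z) := by
        rw [zpow_two, mul_smul, rho_smul, rho_smul]
      rcases hff with h1 | h1 <;> rw [h1]
      · show (0 : ℝ) < ((ρ (T * S) ^ (1 : ℤ)) • z).re
        rw [e1]
        have := La hzre
        linarith
      · show (0 : ℝ) < ((ρ (T * S) ^ (2 : ℤ)) • z).re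
        rw [e2]
        exact Lb (La hzre)
    · -- i = true, j = false
      have henum : ∀ h : Multiplicative (ZMod 2), h ≠ 1 →
          h = Multiplicative.ofAdd ((1 : ℤ) : ZMod 2) := by decide
      intro h hne
      have hff : ff true h = ρ S ^ (1 : ℤ) := by
        rw [show h = _ from henum h hne]; exact zmodMulHom_int 2 _ rho_S_sq 1
      rintro w ⟨z, hz, rfl⟩
      have hzre : 0 < z.re := hz
      show ((ff true h) • z) ∈ XX true
      rw [hff]
      show ((ρ S ^ (1 : ℤ)) • z).re < (0 : ℝ)
      rw [zpow_one, rho_smul]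
      exact Lc hzre
    · simp at hij

/-! ### Maps `β : G →* CoprodI Hfam` and `γ` -/

def sigmaP : Monoid.CoprodI Hfam :=
  Monoid.CoprodI.of (i := true) (Multiplicative.ofAdd (1 : ZMod 2))

def tauP : Monoid.CoprodI Hfam :=
  Monoid.CoprodI.of (i := false) (Multiplicative.ofAdd (1 : ZMod 3))

lemma sigmaP_sq : sigmaP ^ 2 = 1 := by
  have h1 : (Multiplicative.ofAdd (1 : ZMod 2)) ^ 2 = (1 : Multiplicative (ZMod 2)) := by decide
  calc sigmaP ^ 2 = Monoid.CoprodI.of (M := Hfam) (i := true)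
        (((Multiplicative.ofAdd (1 : ZMod 2)) ^ 2 : Multiplicative (ZMod 2))) :=
      (_root_.map_pow _ _ _).symm
    _ = Monoid.CoprodI.of (M := Hfam) (i := true) (1 : Multiplicative (ZMod 2)) := by exact congrArg (Monoid.CoprodI.of (M := Hfam) (i := true)) h1
    _ = 1 := _root_.map_one _

lemma tauP_cube : tauP ^ 3 = 1 := by
  have h1 : (Multiplicative.ofAdd (1 : ZMod 3)) ^ 3 = (1 : Multiplicative (ZMod 3)) := by decide
  calc tauP ^ 3 = Monoid.CoprodI.of (M := Hfam) (i := false)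
        (((Multiplicative.ofAdd (1 : ZMod 3)) ^ 3 : Multiplicative (ZMod 3))) :=
      (_root_.map_pow _ _ _).symm
    _ = Monoid.CoprodI.of (M := Hfam) (i := false) (1 : Multiplicative (ZMod 3)) := by exact congrArg (Monoid.CoprodI.of (M := Hfam) (i := false)) h1
    _ = 1 := _root_.map_one _

def fbeta : Bool → Monoid.CoprodI Hfam := fun b => cond b sigmaP (tauP * sigmaP⁻¹)

lemma fbeta_rels : ∀ r ∈ sl2Rels, FreeGroup.lift fbeta r = 1 := by
  intro r hr
  rcases hr with h | h
  · subst h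
    simp only [map_pow, FreeGroup.lift_apply_of, fbeta, cond]
    rw [show (4 : ℕ) = 2 * 2 from rfl, pow_mul, sigmaP_sq, one_pow]
  · simp only [Set.mem_singleton_iff] at h
    subst h
    simp only [_root_.map_mul, map_pow, map_inv, FreeGroup.lift_apply_of, fbeta, cond]
    rw [inv_mul_cancel_right, tauP_cube, sigmaP_sq, inv_one, mul_one]

def beta : G →* Monoid.CoprodI Hfam := PresentedGroup.toGroup fbeta_rels

/-! ### Final assembly -/

lemma beta_s : beta s = sigmaP := PresentedGroup.toGroup.of fbeta_rels
lemma beta_t : beta t = tauP * sigmaP⁻¹ := PresentedGroup.toGroup.of fbeta_rels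

lemma s_sq_commute : ∀ g : G, Commute (s ^ 2) g := by
  intro g
  have hg : g ∈ Subgroup.closure (Set.range (PresentedGroup.of : Bool → G)) := by
    rw [PresentedGroup.closure_range_of]; trivial
  induction hg using Subgroup.closure_induction with
  | mem x hx =>
    obtain ⟨b, rfl⟩ := hx
    cases b
    · exact s_sq_comm_t
    · exact (Commute.refl s).pow_left 2
  | one => exact Commute.one_right _
  | mul x y _ _ hx hy => exact hx.mul_right hy
  | inv x _ hx => exact hx.inv_right

def Z : Subgroup G := Subgroup.zpowers (s ^ 2)

instance : Z.Normal := by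
  constructor
  intro n hn g
  have : g * n * g⁻¹ = n := by
    obtain ⟨k, rfl⟩ := hn
    have hc : Commute (s ^ 2) g := s_sq_commute g
    have : Commute ((s ^ 2) ^ k) g := hc.zpow_left k
    rw [← this.eq]; group
  rwa [this]

noncomputable def kap : G →* G ⧸ Z := QuotientGroup.mk' Z

lemma kap_s_sq : (kap s) ^ 2 = 1 := by
  rw [← _root_.map_pow]
  exact (QuotientGroup.eq_one_iff _).mpr (Subgroup.mem_zpowers _)

lemma kap_ts_cube : (kap (t * s)) ^ 3 = 1 := by
  rw [← _root_.map_pow, ts_cube]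
  exact (QuotientGroup.eq_one_iff _).mpr (Subgroup.mem_zpowers _)

noncomputable def gam : ∀ b, Hfam b →* G ⧸ Z := fun b =>
  match b with
  | true => zmodMulHom 2 (kap s) kap_s_sq
  | false => zmodMulHom 3 (kap (t * s)) kap_ts_cube

lemma gam_beta : (Monoid.CoprodI.lift gam).comp beta = kap := by
  apply PresentedGroup.ext
  intro b
  cases b
  · show (Monoid.CoprodI.lift gam) (beta t) = kap t
    rw [beta_t, _root_.map_mul, map_inv]
    show (Monoid.CoprodI.lift gam) (Monoid.CoprodI.of _) *
      ((Monoid.CoprodI.lift gam) (Monoid.CoprodI.of _))⁻¹ = _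
    erw [Monoid.CoprodI.lift_of, Monoid.CoprodI.lift_of]
    have e1 : gam false (Multiplicative.ofAdd (1 : ZMod 3)) = kap (t * s) := by
      have := zmodMulHom_int 3 (kap (t * s)) kap_ts_cube 1
      simp at this; exact this
    have e2 : gam true (Multiplicative.ofAdd (1 : ZMod 2)) = kap s := by
      have := zmodMulHom_int 2 (kap s) kap_s_sq 1
      simp at this; exact this
    rw [e1, e2, ← _root_.map_inv, ← _root_.map_mul]
    congr 1
    group
  · show (Monoid.CoprodI.lift gam) (beta s) = kap s
    rw [beta_s]
    show (Monoid.CoprodI.lift gam) (Monoid.CoprodI.of _) = _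
    erw [Monoid.CoprodI.lift_of]

lemma ff_beta : (Monoid.CoprodI.lift ff).comp beta = ρ.comp Phi := by
  apply PresentedGroup.ext
  intro b
  cases b
  · show (Monoid.CoprodI.lift ff) (beta t) = ρ (Phi t)
    rw [beta_t, Phi_t, _root_.map_mul, map_inv]
    show (Monoid.CoprodI.lift ff) (Monoid.CoprodI.of _) *
      ((Monoid.CoprodI.lift ff) (Monoid.CoprodI.of _))⁻¹ = _
    erw [Monoid.CoprodI.lift_of, Monoid.CoprodI.lift_of]
    have e1 : ff false (Multiplicative.ofAdd (1 : ZMod 3)) = ρ (T * S) := by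
      have := zmodMulHom_int 3 (ρ (T * S)) rho_TS_cube 1
      simp at this; exact this
    have e2 : ff true (Multiplicative.ofAdd (1 : ZMod 2)) = ρ S := by
      have := zmodMulHom_int 2 (ρ S) rho_S_sq 1
      simp at this; exact this
    rw [e1, e2, ← _root_.map_inv, ← _root_.map_mul]
    congr 1
    group
  · show (Monoid.CoprodI.lift ff) (beta s) = ρ (Phi s)
    rw [beta_s, Phi_s]
    show (Monoid.CoprodI.lift ff) (Monoid.CoprodI.of _) = _
    erw [Monoid.CoprodI.lift_of]

lemma Phi_injective : Function.Injective Phi := by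
  rw [injective_iff_map_eq_one]
  intro g hg
  -- `beta g = 1` via ping-pong
  have h1 : (Monoid.CoprodI.lift ff) (beta g) = 1 := by
    have h := DFunLike.congr_fun ff_beta g
    simp only [MonoidHom.comp_apply] at h
    rw [h, hg, _root_.map_one]
  have hb : beta g = 1 := by
    apply liftff_injective
    rw [h1, _root_.map_one]
  -- hence `g ∈ Z`
  have hk : kap g = 1 := by
    rw [← gam_beta]
    show (Monoid.CoprodI.lift gam) (beta g) = 1
    rw [hb, _root_.map_one]
  have hgZ : g ∈ Z := (QuotientGroup.eq_one_iff g).mp hk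
  obtain ⟨k, hkk0⟩ := hgZ
  have hkk : (s ^ 2) ^ k = g := hkk0
  -- `g = (s²)^k`; use parity
  have hs4 : (s ^ 2) ^ (2 : ℤ) = 1 := by
    rw [zpow_two, ← pow_add]
    exact s_pow_four
  rcases Int.even_or_odd k with ⟨m, hm⟩ | ⟨m, hm⟩
  · rw [← hkk, hm, ← two_mul, _root_.zpow_mul, hs4, _root_.one_zpow]
  · exfalso
    have : g = s ^ 2 := by
      rw [← hkk, hm, _root_.zpow_add, zpow_one, _root_.zpow_mul, hs4, _root_.one_zpow, one_mul]
    rw [this] at hg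
    rw [map_pow, Phi_s] at hg
    exact S_sq_ne_one hg

noncomputable def theIso : G ≃* SL2Z :=
  MulEquiv.ofBijective Phi ⟨Phi_injective, Phi_surjective⟩

end SL2Aux

/-- The modular group `SL₂(ℤ)` is isomorphic to the group generated by `s, t` with relations
`s⁴ = 1` and `(ts)³ = s²`, via `s ↦ [[0,-1],[1,0]]` and `t ↦ [[1,1],[0,1]]`. -/
theorem stmt1 :
    ∃ φ : PresentedGroup sl2Rels ≃* Matrix.SpecialLinearGroup (Fin 2) ℤ,
      φ (PresentedGroup.of true) = ModularGroup.S ∧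
      φ (PresentedGroup.of false) = ModularGroup.T := by
  exact ⟨SL2Aux.theIso, SL2Aux.Phi_s, SL2Aux.Phi_t⟩
end

section
/- Let G be a locally compact abelian group with Pontryagin dual G*, and let σ be an automorphism of G × G* written in matrix form σ = [[α, β],[γ, δ]] with α: G → G, β: G → G*, γ: G* → G, δ: G* → G*. Then σ preserves the skew-symmetric bicharacter ⟨(x₁,x₁*),(x₂,x₂*)⟩ = (x₁,x₂*)(x₂,x₁*)⁻¹ if and only if αδ* − βγ* = 1_G, αβ* = βα*, and γδ* = δγ*. -/
/-- The Pontryagin dual of a topological abelian group `G` (written multiplicatively):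
continuous homomorphisms into the circle group `𝕋`. -/
abbrev PDual (G : Type*) [Monoid G] [TopologicalSpace G] : Type _ :=
  ContinuousMonoidHom G Circle

/-- The bicharacter `F((x₁,x₁*),(x₂,x₂*)) = (x₁, x₂*)` on `(G × G*) × (G × G*)`. -/
noncomputable def Fbic {G : Type*} [CommGroup G] [TopologicalSpace G]
    (w₁ w₂ : G × PDual G) : Circle :=
  w₂.2 w₁.1

private lemma pd_mul_apply {G : Type*} [CommGroup G] [TopologicalSpace G]
    (f g : PDual G) (a : G) : (f * g) a = f a * g a := rfl

private lemma pd_one_apply {G : Type*} [CommGroup G] [TopologicalSpace G]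
    (a : G) : (1 : PDual G) a = 1 := rfl

/-- Let `G` be a locally compact abelian group with Pontryagin dual `G*`, and let `σ` be a
(topological) automorphism of `G × G*` given in matrix form by `α : G → G`, `β : G → G*`,
`γ : G* → G`, `δ : G* → G*`, i.e. `(x, x*)σ = (xα · x*γ, xβ · x*δ)`.  Then `σ` preserves the
skew-symmetric bicharacter `⟨w₁, w₂⟩ = F(w₁,w₂) F(w₂,w₁)⁻¹` if and only if
`αδ* − βγ* = 1_G`, `αβ* = βα*` and `γδ* = δγ*` (the three conditions being written out
pointwise via the pairing). -/
theorem stmt2 (G : Type*) [CommGroup G] [TopologicalSpace G] [IsTopologicalGroup G]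
    [LocallyCompactSpace G] [T2Space G]
    (σ : (G × PDual G) ≃* (G × PDual G)) (hσ : Continuous σ) (hσ' : Continuous σ.symm)
    (α : ContinuousMonoidHom G G) (β : ContinuousMonoidHom G (PDual G))
    (γ : ContinuousMonoidHom (PDual G) G) (δ : ContinuousMonoidHom (PDual G) (PDual G))
    (hmat : ∀ (x : G) (χ : PDual G), σ (x, χ) = (α x * γ χ, β x * δ χ)) :
    (∀ w₁ w₂ : G × PDual G,
        Fbic (σ w₁) (σ w₂) * (Fbic (σ w₂) (σ w₁))⁻¹ = Fbic w₁ w₂ * (Fbic w₂ w₁)⁻¹)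
      ↔ ((∀ (x : G) (χ : PDual G), δ χ (α x) * (β x (γ χ))⁻¹ = χ x)   -- αδ* − βγ* = 1_G
          ∧ (∀ x y : G, β y (α x) = β x (α y))                        -- αβ* = βα*
          ∧ (∀ χ ψ : PDual G, δ χ (γ ψ) = δ ψ (γ χ))) := by           -- γδ* = δγ*
  constructor
  · intro h
    refine ⟨fun x ψ => ?_, fun x y => ?_, fun χ ψ => ?_⟩
    · have := h (x, 1) (1, ψ)
      simpa [Fbic, hmat, pd_mul_apply, pd_one_apply, eq_comm] using this
    · have := h (x, 1) (y, 1)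
      simp only [Fbic, hmat, pd_mul_apply, pd_one_apply, map_one, one_mul, mul_one,
        inv_one] at this
      exact mul_inv_eq_one.mp this
    · have := h (1, χ) (1, ψ)
      simp only [Fbic, hmat, pd_mul_apply, pd_one_apply, map_one, one_mul, mul_one,
        inv_one] at this
      exact (mul_inv_eq_one.mp this).symm
  · rintro ⟨h1, h2, h3⟩ ⟨x, χ⟩ ⟨y, ψ⟩
    simp only [Fbic, hmat, map_mul, pd_mul_apply, pd_one_apply]
    rw [← h1 x ψ, ← h1 y χ, h2 x y, h3 χ ψ]
    simp [pd_mul_apply, map_mul, mul_assoc, mul_comm, mul_left_comm]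
end

section
/- Let G be a locally compact abelian group in which x ↦ 2x is an automorphism. Then the map (w, t) ↦ (w, F(½w, w)⁻¹ t) is a group isomorphism from the Heisenberg group A(G) (with product (w₁,t₁)(w₂,t₂) = (w₁+w₂, F(w₁,w₂)t₁t₂)) onto the group (A(G), *) with product (w₁,t₁)*(w₂,t₂) = (w₁+w₂, F(½w₁,w₂)F(½w₂,w₁)⁻¹t₁t₂). -/
/-- The underlying set of the Heisenberg group `A(G) = G × G* × 𝕋`. -/
abbrev Heis (G : Type*) [CommGroup G] [TopologicalSpace G] : Type _ :=
  (G × PDual G) × Circle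

/-- The Heisenberg group law `(w₁,t₁)(w₂,t₂) = (w₁ + w₂, F(w₁,w₂) t₁ t₂)`. -/
noncomputable def heisMul {G : Type*} [CommGroup G] [TopologicalSpace G]
    (a b : Heis G) : Heis G :=
  (a.1 * b.1, Fbic a.1 b.1 * a.2 * b.2)

/-- The inverse for the Heisenberg group law. -/
noncomputable def heisInv {G : Type*} [CommGroup G] [TopologicalSpace G] (a : Heis G) : Heis G :=
  (a.1⁻¹, Fbic a.1 a.1 * a.2⁻¹)

/-- The twisted Heisenberg group law
`(w₁,t₁) * (w₂,t₂) = (w₁ + w₂, F(½w₁, w₂) F(½w₂, w₁)⁻¹ t₁ t₂)`, where `e = ½` is the inverse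
of the doubling automorphism of `G`. -/
noncomputable def heisStarMul {G : Type*} [CommGroup G] [TopologicalSpace G]
    (e : G ≃* G) (a b : Heis G) : Heis G :=
  (a.1 * b.1, Fbic (e a.1.1, a.1.2) b.1 * (Fbic (e b.1.1, b.1.2) a.1)⁻¹ * a.2 * b.2)

/-- Let `G` be a locally compact abelian group in which doubling `x ↦ 2x` is an automorphism,
with inverse `½ = e`.  Then `(w, t) ↦ (w, F(½w, w)⁻¹ t)` is a group isomorphism from the
Heisenberg group `A(G)` onto `(A(G), *)` with the twisted product
`(w₁,t₁) * (w₂,t₂) = (w₁+w₂, F(½w₁,w₂) F(½w₂,w₁)⁻¹ t₁ t₂)`. -/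
theorem stmt6 (G : Type*) [CommGroup G] [TopologicalSpace G] [IsTopologicalGroup G]
    [LocallyCompactSpace G] [T2Space G]
    (e : G ≃* G) (he : ∀ x : G, e (x * x) = x) :
    Function.Bijective
        (fun z : Heis G => ((z.1, (Fbic (e z.1.1, z.1.2) z.1)⁻¹ * z.2) : Heis G)) ∧
      ∀ a b : Heis G,
        (fun z : Heis G => ((z.1, (Fbic (e z.1.1, z.1.2) z.1)⁻¹ * z.2) : Heis G)) (heisMul a b)
          = heisStarMul e
              ((fun z : Heis G => ((z.1, (Fbic (e z.1.1, z.1.2) z.1)⁻¹ * z.2) : Heis G)) a)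
              ((fun z : Heis G => ((z.1, (Fbic (e z.1.1, z.1.2) z.1)⁻¹ * z.2) : Heis G)) b) := by
  have he' : ∀ x : G, e x * e x = x := fun x => e.injective (by rw [he (e x)])
  constructor
  · apply Function.bijective_iff_has_inverse.2
    refine ⟨fun z : Heis G => ((z.1, Fbic (e z.1.1, z.1.2) z.1 * z.2) : Heis G), ?_, ?_⟩
    · intro z
      simp
    · intro z
      simp
  · intro a b
    obtain ⟨⟨x₁, χ₁⟩, t₁⟩ := a
    obtain ⟨⟨x₂, χ₂⟩, t₂⟩ := b
    have hmul : ∀ (x : G), (χ₁ * χ₂) x = χ₁ x * χ₂ x := fun _ => rfl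
    simp only [heisMul, heisStarMul, Fbic, Prod.mk.injEq, Prod.fst_mul, Prod.snd_mul,
      hmul, map_mul]
    refine ⟨trivial, ?_⟩
    have h1 : χ₂ x₁ = χ₂ (e x₁) * χ₂ (e x₁) := by rw [← map_mul, he' x₁]
    rw [h1]
    rw [Circle.ext_iff]
    push_cast
    field_simp
end

section
/- Let G be an abelian topological group (in LCA), h: G → 𝕋 a quadratic character with h(x) = h(−x), and ρ: G → G* the homomorphism satisfying h(x+y)h(x)⁻¹h(y)⁻¹ = (x, yρ). Assume ρ is an isomorphism. Then in the group B₀(G) of automorphisms of the Heisenberg group A(G) fixing the center, the elements t₀(h) and d₀'(ρ⁻¹) satisfy d₀'(ρ⁻¹)⁴ = 1 and (t₀(h)·d₀'(ρ⁻¹))³ = d₀'(ρ⁻¹)², so there is a group homomorphism SL₂(ℤ) → B₀(G) sending [[1,1],[0,1]] ↦ t₀(h) and [[0,-1],[1,0]] ↦ d₀'(ρ⁻¹). -/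
section
variable {G : Type*} [CommGroup G] [TopologicalSpace G] [IsTopologicalGroup G]

/-- The element `t₀(h) = ([[1, ρ],[0, 1]], h(x))` of `B₀(G)`, acting on the Heisenberg group
`A(G)` (as a right action) by `((x, x*), t) ↦ ((x, xρ · x*), h(x) t)`. -/
noncomputable def t0 (h : G → Circle) (ρ : G ≃* PDual G) (z : Heis G) : Heis G :=
  ((z.1.1, ρ z.1.1 * z.1.2), h z.1.1 * z.2)

/-- The element `d₀'(ρ⁻¹) = ([[0, −ρ],[ρ⁻¹, 0]], (x, −x*))` of `B₀(G)`, acting on the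
Heisenberg group `A(G)` (as a right action) by
`((x, x*), t) ↦ ((x*ρ⁻¹, (xρ)⁻¹), (x, x*)⁻¹ t)`. -/
noncomputable def d0' (ρ : G ≃* PDual G) (z : Heis G) : Heis G :=
  ((ρ.symm z.1.2, (ρ z.1.1)⁻¹), (z.1.2 z.1.1)⁻¹ * z.2)

end

set_option linter.unusedSectionVars false


section
variable {G : Type*} [CommGroup G] [TopologicalSpace G] [IsTopologicalGroup G]
  (h : G → Circle) (ρ : G ≃* PDual G)

lemma pdual_pow_apply (f : PDual G) (n : ℕ) (x : G) : (f ^ n) x = f x ^ n := by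
  induction n with
  | zero => rfl
  | succ n ih => rw [pow_succ, pow_succ, ← ih]; rfl

lemma pdual_zpow_apply (f : PDual G) (n : ℤ) (x : G) : (f ^ n) x = f x ^ n := by
  cases n with
  | ofNat m => simpa using pdual_pow_apply f m x
  | negSucc m =>
      rw [zpow_negSucc, zpow_negSucc,
        show ((f ^ (m + 1))⁻¹ : PDual G) x = ((f ^ (m+1)) x)⁻¹ from rfl,
        pdual_pow_apply]

variable (heven : ∀ x : G, h x⁻¹ = h x)
  (hq : ∀ x y : G, h (x * y) * (h x)⁻¹ * (h y)⁻¹ = ρ y x)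

include hq

lemma hmul' (x y : G) : h (x * y) = h x * h y * ρ y x := by
  rw [← hq x y]
  apply Additive.ofMul.injective
  simp only [ofMul_mul, ofMul_zpow, ofMul_pow, ofMul_inv, ofMul_one]
  module

lemma Bsymm (x y : G) : ρ x y = ρ y x := by
  rw [← hq x y, ← hq y x, mul_comm x y, mul_right_comm]

lemma h_one : h 1 = 1 := by
  have e : (ρ (1:G)) (1:G) = 1 := by rw [map_one]
  have := hq 1 1
  rw [mul_one, e] at this
  have this' := congrArg Additive.ofMul this
  apply Additive.ofMul.injective
  simp only [ofMul_mul, ofMul_zpow, ofMul_pow, ofMul_inv, ofMul_one] at this' ⊢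
  linear_combination (norm := module) -this'

include heven

lemma Bdiag (x : G) : ρ x x = h x ^ (2 : ℤ) := by
  have := hmul' h ρ hq x x⁻¹
  rw [mul_inv_cancel, h_one h ρ hq, heven, map_inv,
    show ((ρ x)⁻¹ : PDual G) x = ((ρ x) x)⁻¹ from rfl] at this
  apply Additive.ofMul.injective
  have := congrArg Additive.ofMul this
  simp only [ofMul_mul, ofMul_zpow, ofMul_pow, ofMul_inv, ofMul_one] at this ⊢
  linear_combination (norm := module) this

lemma h_zpow (x : G) (n : ℤ) : h (x ^ n) = h x ^ (n * n) := by
  have key : ∀ m : ℕ, h (x ^ m) = h x ^ ((m : ℤ) * m) := by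
    intro m
    induction m with
    | zero => simpa using h_one h ρ hq
    | succ m ih =>
        rw [pow_succ, hmul' h ρ hq, ih, map_pow, Bdiag h ρ heven hq]
        apply Additive.ofMul.injective
        simp only [ofMul_mul, ofMul_zpow, ofMul_pow, ofMul_inv, ofMul_one]
        match_scalars <;> (push_cast; ring)
  cases n with
  | ofNat m => simpa using key m
  | negSucc m =>
      rw [show (Int.negSucc m) = -((m:ℤ)+1) from rfl, zpow_neg, heven,
        show ((m:ℤ)+1) = ((m+1 : ℕ) : ℤ) by push_cast; ring, zpow_natCast,
        show h (x ^ (m+1)) = h x ^ (((m+1:ℕ):ℤ) * ((m+1:ℕ):ℤ)) from key (m+1)]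
      congr 1 <;> ring_nf

lemma h_mixed (x u : G) (m n : ℤ) :
    h (x ^ m * u ^ n) = h x ^ (m*m) * h u ^ (n*n) * (ρ u x) ^ (m*n) := by
  rw [hmul' h ρ hq, h_zpow h ρ heven hq, h_zpow h ρ heven hq,
    map_zpow (ρ (u^n)) x m, map_zpow ρ u n, pdual_zpow_apply]
  apply Additive.ofMul.injective
  simp only [ofMul_mul, ofMul_zpow, ofMul_pow, ofMul_inv, ofMul_one]
  match_scalars <;> ring

omit heven hq

lemma Beval (x u v : G) (m n : ℤ) :
    (ρ (x ^ m * u ^ n)) v = ρ x v ^ m * ρ u v ^ n := by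
  rw [map_mul, map_zpow, map_zpow,
    show ((ρ x ^ m * ρ u ^ n : PDual G)) v = (ρ x ^ m) v * (ρ u ^ n) v from rfl,
    pdual_zpow_apply, pdual_zpow_apply]


noncomputable def phi (h : G → Circle) (ρ : G ≃* PDual G)
    (g : Matrix.SpecialLinearGroup (Fin 2) ℤ) (z : Heis G) : Heis G :=
  ((z.1.1 ^ (g.1 0 0) * (ρ.symm z.1.2) ^ (g.1 1 0),
    ρ (z.1.1 ^ (g.1 0 1) * (ρ.symm z.1.2) ^ (g.1 1 1))),
   h z.1.1 ^ (g.1 0 0 * g.1 0 1) * h (ρ.symm z.1.2) ^ (g.1 1 0 * g.1 1 1)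
     * (ρ (ρ.symm z.1.2) z.1.1) ^ (g.1 0 1 * g.1 1 0) * z.2)

lemma phi_apply (g : Matrix.SpecialLinearGroup (Fin 2) ℤ) (x u : G) (t : Circle) :
    phi h ρ g ((x, ρ u), t)
      = ((x ^ (g.1 0 0) * u ^ (g.1 1 0), ρ (x ^ (g.1 0 1) * u ^ (g.1 1 1))),
         h x ^ (g.1 0 0 * g.1 0 1) * h u ^ (g.1 1 0 * g.1 1 1)
           * (ρ u x) ^ (g.1 0 1 * g.1 1 0) * t) := by
  simp only [phi, MulEquiv.symm_apply_apply]

variable (heven : ∀ x : G, h x⁻¹ = h x)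
  (hq : ∀ x y : G, h (x * y) * (h x)⁻¹ * (h y)⁻¹ = ρ y x)

include heven hq

lemma Beval2 (x u : G) (a b c d : ℤ) :
    (ρ (x ^ b * u ^ d)) (x ^ a * u ^ c)
      = h x ^ (2*a*b) * h u ^ (2*c*d) * (ρ u x) ^ (a*d + b*c) := by
  rw [Beval ρ, map_mul, map_mul, map_zpow, map_zpow, map_zpow, map_zpow,
    Bdiag h ρ heven hq, Bdiag h ρ heven hq, Bsymm h ρ hq x u]
  apply Additive.ofMul.injective
  simp only [ofMul_mul, ofMul_zpow, ofMul_pow, ofMul_inv, ofMul_one]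
  match_scalars <;> ring

lemma phi_comp (g₁ g₂ : Matrix.SpecialLinearGroup (Fin 2) ℤ) (z : Heis G) :
    phi h ρ (g₁ * g₂) z = phi h ρ g₂ (phi h ρ g₁ z) := by
  obtain ⟨⟨x, χ⟩, t⟩ := z
  obtain ⟨u, rfl⟩ : ∃ u, ρ u = χ := ⟨ρ.symm χ, ρ.apply_symm_apply χ⟩
  have e2 : g₂.1 0 0 * g₂.1 1 1 - g₂.1 0 1 * g₂.1 1 0 = 1 := by
    have := g₂.2; rwa [Matrix.det_fin_two] at this
  have entries : ∀ i j, (g₁ * g₂).1 i j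
      = g₁.1 i 0 * g₂.1 0 j + g₁.1 i 1 * g₂.1 1 j := by
    intro i j
    rw [Matrix.SpecialLinearGroup.coe_mul, Matrix.mul_apply, Fin.sum_univ_two]
  rw [phi_apply, phi_apply, phi_apply]
  simp only [entries]
  set a := g₁.1 0 0; set b := g₁.1 0 1; set c := g₁.1 1 0; set d := g₁.1 1 1
  set a' := g₂.1 0 0; set b' := g₂.1 0 1; set c' := g₂.1 1 0; set d' := g₂.1 1 1
  refine Prod.ext (Prod.ext ?_ ?_) ?_
  · show x ^ (a * a' + b * c') * u ^ (c * a' + d * c')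
      = (x ^ a * u ^ c) ^ a' * (x ^ b * u ^ d) ^ c'
    apply Additive.ofMul.injective
    simp only [ofMul_mul, ofMul_zpow, ofMul_pow, ofMul_inv, ofMul_one]
    match_scalars <;> ring
  · show ρ (x ^ (a * b' + b * d') * u ^ (c * b' + d * d'))
      = ρ ((x ^ a * u ^ c) ^ b' * (x ^ b * u ^ d) ^ d')
    congr 1
    apply Additive.ofMul.injective
    simp only [ofMul_mul, ofMul_zpow, ofMul_pow, ofMul_inv, ofMul_one]
    match_scalars <;> ring
  · show h x ^ ((a * a' + b * c') * (a * b' + b * d'))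
        * h u ^ ((c * a' + d * c') * (c * b' + d * d'))
        * (ρ u x) ^ ((a * b' + b * d') * (c * a' + d * c')) * t
      = h (x ^ a * u ^ c) ^ (a' * b') * h (x ^ b * u ^ d) ^ (c' * d')
        * (ρ (x ^ b * u ^ d)) (x ^ a * u ^ c) ^ (b' * c')
        * (h x ^ (a * b) * h u ^ (c * d) * (ρ u x) ^ (b * c) * t)
    rw [h_mixed h ρ heven hq, h_mixed h ρ heven hq, Beval2 h ρ heven hq]
    apply Additive.ofMul.injective
    simp only [ofMul_mul, ofMul_zpow, ofMul_pow, ofMul_inv, ofMul_one]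
    match_scalars
    · linear_combination (a*b) * e2
    · linear_combination (c*d) * e2
    · linear_combination (b*c) * e2
    · ring

lemma Beval4 (x u y v : G) (a b c d : ℤ) :
    (ρ (y ^ b * v ^ d)) (x ^ a * u ^ c)
      = (ρ y) x ^ (a*b) * (ρ y) u ^ (c*b) * (ρ v) x ^ (a*d) * (ρ v) u ^ (c*d) := by
  rw [Beval ρ, map_mul, map_mul, map_zpow, map_zpow, map_zpow, map_zpow]
  apply Additive.ofMul.injective
  simp only [ofMul_mul, ofMul_zpow, ofMul_pow, ofMul_inv, ofMul_one]
  match_scalars <;> ring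

lemma phi_hmul (g : Matrix.SpecialLinearGroup (Fin 2) ℤ) (z w : Heis G) :
    phi h ρ g (heisMul z w) = heisMul (phi h ρ g z) (phi h ρ g w) := by
  obtain ⟨⟨x₁, χ₁⟩, t₁⟩ := z
  obtain ⟨u₁, rfl⟩ : ∃ u, ρ u = χ₁ := ⟨ρ.symm χ₁, ρ.apply_symm_apply χ₁⟩
  obtain ⟨⟨x₂, χ₂⟩, t₂⟩ := w
  obtain ⟨u₂, rfl⟩ : ∃ u, ρ u = χ₂ := ⟨ρ.symm χ₂, ρ.apply_symm_apply χ₂⟩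
  have e : g.1 0 0 * g.1 1 1 - g.1 0 1 * g.1 1 0 = 1 := by
    have := g.2; rwa [Matrix.det_fin_two] at this
  set a := g.1 0 0; set b := g.1 0 1; set c := g.1 1 0; set d := g.1 1 1
  have hm : heisMul (G := G) ((x₁, ρ u₁), t₁) ((x₂, ρ u₂), t₂)
      = ((x₁ * x₂, ρ (u₁ * u₂)), (ρ u₂) x₁ * t₁ * t₂) := by
    simp only [heisMul, Fbic, Prod.mk_mul_mk, map_mul]
  rw [hm, phi_apply, phi_apply, phi_apply]
  have hm2 : heisMul (G := G)
      ((x₁ ^ a * u₁ ^ c, ρ (x₁ ^ b * u₁ ^ d)),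
        h x₁ ^ (a * b) * h u₁ ^ (c * d) * (ρ u₁ x₁) ^ (b * c) * t₁)
      ((x₂ ^ a * u₂ ^ c, ρ (x₂ ^ b * u₂ ^ d)),
        h x₂ ^ (a * b) * h u₂ ^ (c * d) * (ρ u₂ x₂) ^ (b * c) * t₂)
      = ((x₁ ^ a * u₁ ^ c * (x₂ ^ a * u₂ ^ c),
          ρ (x₁ ^ b * u₁ ^ d) * ρ (x₂ ^ b * u₂ ^ d)),
         (ρ (x₂ ^ b * u₂ ^ d)) (x₁ ^ a * u₁ ^ c)
           * (h x₁ ^ (a * b) * h u₁ ^ (c * d) * (ρ u₁ x₁) ^ (b * c) * t₁)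
           * (h x₂ ^ (a * b) * h u₂ ^ (c * d) * (ρ u₂ x₂) ^ (b * c) * t₂)) := by
    simp only [heisMul, Fbic, Prod.mk_mul_mk]
  rw [hm2]
  refine Prod.ext (Prod.ext ?_ ?_) ?_
  · show (x₁ * x₂) ^ a * (u₁ * u₂) ^ c
      = x₁ ^ a * u₁ ^ c * (x₂ ^ a * u₂ ^ c)
    apply Additive.ofMul.injective
    simp only [ofMul_mul, ofMul_zpow, ofMul_pow, ofMul_inv, ofMul_one]
    match_scalars <;> ring
  · show ρ ((x₁ * x₂) ^ b * (u₁ * u₂) ^ d)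
      = ρ (x₁ ^ b * u₁ ^ d) * ρ (x₂ ^ b * u₂ ^ d)
    rw [← map_mul]
    congr 1
    apply Additive.ofMul.injective
    simp only [ofMul_mul, ofMul_zpow, ofMul_pow, ofMul_inv, ofMul_one]
    match_scalars <;> ring
  · show h (x₁ * x₂) ^ (a * b) * h (u₁ * u₂) ^ (c * d)
        * (ρ (u₁ * u₂)) (x₁ * x₂) ^ (b * c) * ((ρ u₂) x₁ * t₁ * t₂)
      = (ρ (x₂ ^ b * u₂ ^ d)) (x₁ ^ a * u₁ ^ c)
        * (h x₁ ^ (a * b) * h u₁ ^ (c * d) * (ρ u₁ x₁) ^ (b * c) * t₁)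
        * (h x₂ ^ (a * b) * h u₂ ^ (c * d) * (ρ u₂ x₂) ^ (b * c) * t₂)
    rw [hmul' h ρ hq x₁ x₂, hmul' h ρ hq u₁ u₂, Beval4 h ρ heven hq,
      show (ρ (u₁ * u₂)) (x₁ * x₂)
          = ρ u₁ x₁ * ρ u₁ x₂ * (ρ u₂ x₁ * ρ u₂ x₂) from by
        rw [map_mul ρ u₁ u₂]
        show (ρ u₁) (x₁ * x₂) * (ρ u₂) (x₁ * x₂) = _
        rw [map_mul, map_mul],
      Bsymm h ρ hq x₂ u₁]
    apply Additive.ofMul.injective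
    simp only [ofMul_mul, ofMul_zpow, ofMul_pow, ofMul_inv, ofMul_one]
    match_scalars <;> (try ring) <;>
      first
      | linear_combination e
      | linear_combination (-1 : ℤ) * e
      | linear_combination (2 : ℤ) * e
      | linear_combination (-2 : ℤ) * e
      | linear_combination (3 : ℤ) * e
      | linear_combination (-3 : ℤ) * e

lemma phi_one (z : Heis G) : phi h ρ 1 z = z := by
  obtain ⟨⟨x, χ⟩, t⟩ := z
  obtain ⟨u, rfl⟩ : ∃ u, ρ u = χ := ⟨ρ.symm χ, ρ.apply_symm_apply χ⟩
  rw [phi_apply]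
  have e : ∀ i j, ((1 : Matrix.SpecialLinearGroup (Fin 2) ℤ)).1 i j
      = (1 : Matrix (Fin 2) (Fin 2) ℤ) i j := fun i j => rfl
  simp [e, Matrix.one_apply, h_one h ρ hq]

lemma phi_T (z : Heis G) : phi h ρ ModularGroup.T z = t0 h ρ z := by
  obtain ⟨⟨x, χ⟩, t⟩ := z
  obtain ⟨u, rfl⟩ : ∃ u, ρ u = χ := ⟨ρ.symm χ, ρ.apply_symm_apply χ⟩
  rw [phi_apply]
  simp [t0, ModularGroup.T, map_mul]

lemma phi_S (z : Heis G) : phi h ρ ModularGroup.S z = d0' ρ z := by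
  obtain ⟨⟨x, χ⟩, t⟩ := z
  obtain ⟨u, rfl⟩ : ∃ u, ρ u = χ := ⟨ρ.symm χ, ρ.apply_symm_apply χ⟩
  rw [phi_apply]
  have h00 : (ModularGroup.S).1 0 0 = 0 := rfl
  have h01 : (ModularGroup.S).1 0 1 = -1 := rfl
  have h10 : (ModularGroup.S).1 1 0 = 1 := rfl
  have h11 : (ModularGroup.S).1 1 1 = 0 := rfl
  simp only [h00, h01, h10, h11]
  refine Prod.ext (Prod.ext ?_ ?_) ?_
  · show x ^ (0:ℤ) * u ^ (1:ℤ) = ρ.symm (ρ u)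
    rw [zpow_zero, zpow_one, one_mul, MulEquiv.symm_apply_apply]
  · show ρ (x ^ (-1:ℤ) * u ^ (0:ℤ)) = (ρ x)⁻¹
    rw [zpow_zero, mul_one, zpow_neg_one, map_inv]
  · show h x ^ ((0:ℤ)*(-1)) * h u ^ ((1:ℤ)*0) * (ρ u) x ^ ((-1:ℤ)*1) * t
      = ((ρ u) x)⁻¹ * t
    norm_num

lemma phi_center (g : Matrix.SpecialLinearGroup (Fin 2) ℤ) (t : Circle) :
    phi h ρ g ((1, t) : Heis G) = ((1, t) : Heis G) := by
  have e1 : ((1, t) : Heis G) = ((((1:G), ρ 1)), t) := by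
    rw [map_one]; rfl
  rw [e1, phi_apply]
  have e : (ρ (1:G)) (1:G) = 1 := by rw [map_one]
  simp [h_one h ρ hq, e, map_one]

end

/-- Let `h` be a non-degenerate quadratic character of a locally compact abelian group `G`
satisfying `h(x) = h(−x)`, with associated isomorphism `ρ : G ≅ G*`, so that
`h(x+y) h(x)⁻¹ h(y)⁻¹ = (x, yρ)`.  Then in `B₀(G)` one has `d₀'(ρ⁻¹)⁴ = 1` and
`(t₀(h) d₀'(ρ⁻¹))³ = d₀'(ρ⁻¹)²`, and there is a group homomorphism `SL₂(ℤ) → B₀(G)`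
(a homomorphism for the right-action convention) sending `[[1,1],[0,1]] ↦ t₀(h)` and
`[[0,−1],[1,0]] ↦ d₀'(ρ⁻¹)`, landing in the automorphisms of `A(G)` fixing the center
pointwise. -/
theorem stmt7 (G : Type*) [CommGroup G] [TopologicalSpace G] [IsTopologicalGroup G]
    [LocallyCompactSpace G] [T2Space G]
    (h : G → Circle) (hcont : Continuous h) (heven : ∀ x : G, h x⁻¹ = h x)
    (ρ : G ≃* PDual G) (hρ : Continuous ρ) (hρ' : Continuous ρ.symm)
    (hq : ∀ x y : G, h (x * y) * (h x)⁻¹ * (h y)⁻¹ = ρ y x) :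
    (∀ z : Heis G, d0' ρ (d0' ρ (d0' ρ (d0' ρ z))) = z) ∧
    (∀ z : Heis G,
        d0' ρ (t0 h ρ (d0' ρ (t0 h ρ (d0' ρ (t0 h ρ z))))) = d0' ρ (d0' ρ z)) ∧
    ∃ φ : Matrix.SpecialLinearGroup (Fin 2) ℤ → Heis G → Heis G,
      (∀ g₁ g₂ : Matrix.SpecialLinearGroup (Fin 2) ℤ, ∀ z : Heis G,
          φ (g₁ * g₂) z = φ g₂ (φ g₁ z)) ∧
      φ ModularGroup.T = t0 h ρ ∧ φ ModularGroup.S = d0' ρ ∧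
      ∀ g : Matrix.SpecialLinearGroup (Fin 2) ℤ,
        Function.Bijective (φ g) ∧
        (∀ a b : Heis G, φ g (heisMul a b) = heisMul (φ g a) (φ g b)) ∧
        (∀ t : Circle, φ g ((1, t) : Heis G) = ((1, t) : Heis G)) := by
  have hT : phi h ρ ModularGroup.T = t0 h ρ := funext (phi_T h ρ heven hq)
  have hS : phi h ρ ModularGroup.S = d0' ρ := funext (phi_S h ρ heven hq)
  have comp := phi_comp h ρ heven hq
  have one := phi_one h ρ heven hq
  refine ⟨?_, ?_, phi h ρ, comp, hT, hS, ?_⟩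
  · intro z
    rw [← hS]
    simp only [← comp]
    rw [show ModularGroup.S * ModularGroup.S * ModularGroup.S * ModularGroup.S = 1 from by
      ext i j; fin_cases i <;> fin_cases j <;>
        simp [Matrix.SpecialLinearGroup.coe_mul, ModularGroup.coe_S, Matrix.mul_apply, Fin.sum_univ_two]]
    exact one z
  · intro z
    rw [← hS, ← hT]
    simp only [← comp]
    congr 1
    ext i j; fin_cases i <;> fin_cases j <;>
      simp [Matrix.SpecialLinearGroup.coe_mul, ModularGroup.coe_S, ModularGroup.coe_T, Matrix.mul_apply, Fin.sum_univ_two]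
  · intro g
    refine ⟨?_, phi_hmul h ρ heven hq g, phi_center h ρ heven hq g⟩
    refine Function.bijective_iff_has_inverse.mpr ⟨phi h ρ g⁻¹, fun z => ?_, fun z => ?_⟩
    · rw [← comp, mul_inv_cancel]; exact one z
    · rw [← comp, inv_mul_cancel]; exact one z
end

section
/- Let G₁ → G₂ → G₃ be a short exact sequence in the category LCA of locally compact Hausdorff abelian groups (i.e., G₁ → G₂ is a closed embedding and G₂ → G₃ induces a topological isomorphism G₂/G₁ ≅ G₃). Then for any continuous homomorphism f: B → G₃ from an LCA group B, the pullback G₂' = {(a,b) ∈ G₂ × B : g(a) = f(b)} (with the subspace topology) exists in LCA, the projection G₂' → B is an open surjection with kernel topologically isomorphic to G₁, and G₁ → G₂' → B is again a short exact sequence in LCA. -/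
open Topology

/-- The pullback `G₂' = {(a, b) ∈ G₂ × B : g(a) = f(b)}`, as a subgroup of `G₂ × B`. -/
def pullbackSubgroup {G₂ G₃ B : Type*} [CommGroup G₂] [CommGroup G₃] [CommGroup B]
    (g : G₂ →* G₃) (f : B →* G₃) : Subgroup (G₂ × B) where
  carrier := {p | g p.1 = f p.2}
  one_mem' := by simp
  mul_mem' := by
    intro a b ha hb
    simp only [Set.mem_setOf_eq, Prod.fst_mul, Prod.snd_mul, map_mul] at *
    rw [ha, hb]
  inv_mem' := by
    intro a ha
    simp only [Set.mem_setOf_eq, Prod.fst_inv, Prod.snd_inv, map_inv] at *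
    rw [ha]

/-- Let `G₁ → G₂ → G₃` be a short exact sequence in the category LCA of locally compact
Hausdorff abelian groups (`i` a closed embedding, `g` a continuous open surjection with
kernel the image of `i`).  Then for any continuous homomorphism `f : B → G₃` from an LCA
group `B`, the pullback `G₂' = {(a, b) ∈ G₂ × B : g(a) = f(b)}` (with the subspace topology)
exists in LCA (it is a closed, locally compact subgroup), the projection `G₂' → B` is a
continuous open surjection, its kernel is the image of a closed embedding of `G₁`, and
`G₁ → G₂' → B` is again a short exact sequence in LCA. -/
theorem stmt15 (G₁ G₂ G₃ B : Type*)
    [CommGroup G₁] [TopologicalSpace G₁] [IsTopologicalGroup G₁]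
    [LocallyCompactSpace G₁] [T2Space G₁]
    [CommGroup G₂] [TopologicalSpace G₂] [IsTopologicalGroup G₂]
    [LocallyCompactSpace G₂] [T2Space G₂]
    [CommGroup G₃] [TopologicalSpace G₃] [IsTopologicalGroup G₃]
    [LocallyCompactSpace G₃] [T2Space G₃]
    [CommGroup B] [TopologicalSpace B] [IsTopologicalGroup B]
    [LocallyCompactSpace B] [T2Space B]
    (i : G₁ →* G₂) (g : G₂ →* G₃)
    (hi : IsClosedEmbedding ⇑i)
    (hg : Continuous g) (hgs : Function.Surjective g) (hgo : IsOpenMap g)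
    (hexact : ∀ x : G₂, g x = 1 ↔ x ∈ Set.range i)
    (f : B →* G₃) (hf : Continuous f) :
    -- the pullback exists in LCA:
    IsClosed ((pullbackSubgroup g f : Subgroup (G₂ × B)) : Set (G₂ × B)) ∧
    LocallyCompactSpace (pullbackSubgroup g f) ∧
    T2Space (pullbackSubgroup g f) ∧
    -- the projection `G₂' → B` is a continuous open surjection:
    Continuous (fun p : pullbackSubgroup g f => (p : G₂ × B).2) ∧
    Function.Surjective (fun p : pullbackSubgroup g f => (p : G₂ × B).2) ∧
    IsOpenMap (fun p : pullbackSubgroup g f => (p : G₂ × B).2) ∧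
    -- `i' : G₁ → G₂'`, `x ↦ (i x, 1)`, is a closed embedding whose image is the kernel of
    -- the projection, so that `G₁ → G₂' → B` is again a short exact sequence in LCA:
    ∃ i' : G₁ →* pullbackSubgroup g f,
      (∀ x : G₁, ((i' x : G₂ × B)) = (i x, 1)) ∧
      IsClosedEmbedding ⇑i' ∧
      (∀ p : pullbackSubgroup g f, (p : G₂ × B).2 = 1 ↔ p ∈ Set.range i') := by
  classical
  have hP : IsClosed ((pullbackSubgroup g f : Subgroup (G₂ × B)) : Set (G₂ × B)) := by
    have heq : ((pullbackSubgroup g f : Subgroup (G₂ × B)) : Set (G₂ × B)) =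
        {p : G₂ × B | g p.1 = f p.2} := rfl
    rw [heq]
    exact isClosed_eq (hg.comp continuous_fst) (hf.comp continuous_snd)
  have hmem : ∀ x : G₁, ((i x, (1:B)) : G₂ × B) ∈ pullbackSubgroup g f := by
    intro x
    show g (i x) = f 1
    rw [map_one, (hexact (i x)).mpr ⟨x, rfl⟩]
  refine ⟨hP, hP.locallyCompactSpace, inferInstance,
    continuous_snd.comp continuous_subtype_val, ?_, ?_, ?_⟩
  · intro b
    obtain ⟨a, ha⟩ := hgs (f b)
    exact ⟨⟨(a, b), ha⟩, rfl⟩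
  · intro U hU
    rw [isOpen_iff_mem_nhds]
    rintro _ ⟨⟨⟨a, b⟩, hab⟩, hpU, rfl⟩
    obtain ⟨O, hO, rfl⟩ := isOpen_induced_iff.mp hU
    have habO : ((a, b) : G₂ × B) ∈ O := hpU
    obtain ⟨V, hV, W, hW, hVW⟩ := mem_nhds_prod_iff.mp (hO.mem_nhds habO)
    have h1 : g '' V ∈ 𝓝 (f b) := hab ▸ hgo.image_mem_nhds hV
    have h2 : f ⁻¹' (g '' V) ∈ 𝓝 b := hf.continuousAt.preimage_mem_nhds h1
    filter_upwards [h2, hW] with b' hb1 hb2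
    obtain ⟨a', ha'V, ha'⟩ := hb1
    exact ⟨⟨(a', b'), ha'⟩, hVW ⟨ha'V, hb2⟩, rfl⟩
  · refine ⟨{ toFun := fun x => ⟨(i x, 1), hmem x⟩
              map_one' := Subtype.ext (by simp)
              map_mul' := fun x y => Subtype.ext (by simp [Prod.ext_iff]) }, fun x => rfl, ?_, ?_⟩
    · have hi'' : IsClosedEmbedding (fun x : G₁ => ((i x, (1:B)) : G₂ × B)) := by
        refine IsClosedEmbedding.of_continuous_injective_isClosedMap
          (hi.continuous.prodMk continuous_const)
          (fun x y hxy => hi.injective (congrArg Prod.fst hxy)) ?_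
        intro s hs
        have himg : (fun x : G₁ => ((i x, (1:B)) : G₂ × B)) '' s = (i '' s) ×ˢ {1} := by
          ext ⟨p1, p2⟩
          constructor
          · rintro ⟨x, hx, heq⟩
            rw [← heq]
            exact ⟨⟨x, hx, rfl⟩, rfl⟩
          · rintro ⟨⟨x, hx, rfl⟩, h2⟩
            exact ⟨x, hx, by simp_all⟩
        rw [himg]
        exact (hi.isClosedMap s hs).prod isClosed_singleton
      have hval : IsClosedEmbedding (Subtype.val : pullbackSubgroup g f → G₂ × B) :=
        hP.isClosedEmbedding_subtypeVal
      exact (Topology.IsClosedEmbedding.of_comp_iff hval).mp hi''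
    · rintro ⟨⟨a, b2⟩, hab⟩
      constructor
      · intro hb2
        simp only at hb2
        subst hb2
        have h0 : g a = f 1 := hab
        have hone : g a = 1 := by rwa [map_one] at h0
        obtain ⟨x, hx⟩ := (hexact a).mp hone
        exact ⟨x, Subtype.ext (by simp [hx])⟩
      · rintro ⟨x, hx⟩
        have := congrArg (fun p : pullbackSubgroup g f => (p : G₂ × B).2) hx
        simpa using this.symm
end

section
/- The class of all kernel-cokernel pairs in the category LCA of locally compact Hausdorff abelian groups (pairs G₁ → G₂ → G₃ with G₁ → G₂ a closed embedding and G₂ → G₃ inducing a topological isomorphism G₂/G₁ ≅ G₃) forms an exact structure on LCA; in particular LCA is a quasi-abelian/exact category. -/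
open Topology Function

universe u

section
variable {A B : Type u} [CommGroup A] [TopologicalSpace A] [CommGroup B] [TopologicalSpace B]

/-- `A` is an object of LCA: a locally compact Hausdorff abelian topological group. -/
def IsLCAGroup (A : Type u) [CommGroup A] [TopologicalSpace A] : Prop :=
  IsTopologicalGroup A ∧ LocallyCompactSpace A ∧ T2Space A

/-- Admissible monics in LCA: continuous homomorphisms that are closed embeddings. -/
def AdmMonic (f : A →* B) : Prop :=
  IsClosedEmbedding ⇑f

/-- Admissible epics in LCA: continuous surjective open homomorphisms (equivalently, those
inducing a topological isomorphism of the quotient by the kernel onto the target). -/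
def AdmEpic (f : A →* B) : Prop :=
  Continuous f ∧ Surjective f ∧ IsOpenMap f

end

/-- The kernel-cokernel pairs of LCA: `i` is a closed embedding, `p` is a continuous open
surjection, and the range of `i` is the kernel of `p`. -/
def KerCokerPair {A B C : Type u} [CommGroup A] [TopologicalSpace A] [CommGroup B]
    [TopologicalSpace B] [CommGroup C] [TopologicalSpace C] (i : A →* B) (p : B →* C) : Prop :=
  AdmMonic i ∧ AdmEpic p ∧ ∀ b : B, p b = 1 ↔ b ∈ Set.range i

section Aux

variable {A B C : Type u} [CommGroup A] [TopologicalSpace A] [CommGroup B]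
  [TopologicalSpace B] [CommGroup C] [TopologicalSpace C]

theorem pullback_aux (hA : IsLCAGroup A) (hB : IsLCAGroup B) (hC : IsLCAGroup C)
    (p : A →* B) (f : C →* B) (hp : AdmEpic p) (hf : Continuous f) :
    ∃ (D : Type u) (_ : CommGroup D) (_ : TopologicalSpace D), IsLCAGroup D ∧
      ∃ (p' : D →* C) (f' : D →* A),
        AdmEpic p' ∧ Continuous f' ∧ p.comp f' = f.comp p' ∧
        ∀ (Z : Type u) (_ : CommGroup Z) (_ : TopologicalSpace Z), IsLCAGroup Z →
          ∀ (u : Z →* A) (v : Z →* C), Continuous u → Continuous v →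
            p.comp u = f.comp v →
            ∃! w : Z →* D, Continuous w ∧ f'.comp w = u ∧ p'.comp w = v := by
  haveI := hA.1; haveI := hA.2.1; haveI := hA.2.2
  haveI := hB.1; haveI := hB.2.1; haveI := hB.2.2
  haveI := hC.1; haveI := hC.2.1; haveI := hC.2.2
  set P : Subgroup (A × C) := ((p.comp (MonoidHom.fst A C)) / (f.comp (MonoidHom.snd A C))).ker
    with hP
  have hPmem : ∀ x : A × C, x ∈ P ↔ p x.1 = f x.2 := by
    intro x
    simp [hP, MonoidHom.mem_ker, div_eq_one]
  have hPclosed : IsClosed (P : Set (A × C)) := by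
    have : (P : Set (A × C)) = {x : A × C | p x.1 = f x.2} := Set.ext fun x => hPmem x
    rw [this]
    exact isClosed_eq (hp.1.comp continuous_fst) (hf.comp continuous_snd)
  haveI : LocallyCompactSpace P := hPclosed.locallyCompactSpace
  refine ⟨P, inferInstance, inferInstance, ⟨inferInstance, inferInstance, inferInstance⟩, ?_⟩
  refine ⟨(MonoidHom.snd A C).comp P.subtype, (MonoidHom.fst A C).comp P.subtype, ?_, ?_, ?_, ?_⟩
  · refine ⟨continuous_snd.comp continuous_subtype_val, ?_, ?_⟩
    · intro c
      obtain ⟨a, ha⟩ := hp.2.1 (f c)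
      exact ⟨⟨(a, c), (hPmem _).mpr ha⟩, rfl⟩
    · intro O hO
      obtain ⟨W, hW, rfl⟩ := isOpen_induced_iff.mp hO
      rw [isOpen_iff_forall_mem_open]
      rintro c ⟨x, hxW, rfl⟩
      obtain ⟨U, V, hU, hV, haU, hcV, hUV⟩ := isOpen_prod_iff.mp hW x.val.1 x.val.2 hxW
      refine ⟨f ⁻¹' (p '' U) ∩ V, ?_, ((hp.2.2 U hU).preimage hf).inter hV, ?_, hcV⟩
      · rintro c ⟨⟨a, haU', hpa⟩, hcV'⟩
        exact ⟨⟨(a, c), (hPmem _).mpr hpa⟩, hUV (Set.mk_mem_prod haU' hcV'), rfl⟩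
      · exact ⟨x.val.1, haU, (hPmem _).mp x.2⟩
  · exact continuous_fst.comp continuous_subtype_val
  · exact MonoidHom.ext fun x => (hPmem _).mp x.2
  · intro Z _ _ _ u v hu hv hcomm
    have hmem : ∀ z, (u z, v z) ∈ P :=
      fun z => (hPmem _).mpr (DFunLike.congr_fun hcomm z)
    refine ⟨MonoidHom.codRestrict (u.prod v) P hmem, ⟨?_, rfl, rfl⟩, ?_⟩
    · exact Continuous.subtype_mk (hu.prodMk hv) _
    · rintro w' ⟨-, h1, h2⟩
      refine MonoidHom.ext fun z => Subtype.ext (Prod.ext ?_ ?_)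
      · exact DFunLike.congr_fun h1 z
      · exact DFunLike.congr_fun h2 z


theorem pushout_aux (hA : IsLCAGroup A) (hB : IsLCAGroup B) (hC : IsLCAGroup C)
    (i : A →* B) (f : A →* C) (hi : AdmMonic i) (hf : Continuous f) :
    ∃ (D : Type u) (_ : CommGroup D) (_ : TopologicalSpace D), IsLCAGroup D ∧
      ∃ (i' : C →* D) (f' : B →* D),
        AdmMonic i' ∧ Continuous f' ∧ i'.comp f = f'.comp i ∧
        ∀ (Z : Type u) (_ : CommGroup Z) (_ : TopologicalSpace Z), IsLCAGroup Z →
          ∀ (u : B →* Z) (v : C →* Z), Continuous u → Continuous v →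
            u.comp i = v.comp f →
            ∃! w : D →* Z, Continuous w ∧ w.comp f' = u ∧ w.comp i' = v := by
  haveI := hA.1; haveI := hA.2.1; haveI := hA.2.2
  haveI := hB.1; haveI := hB.2.1; haveI := hB.2.2
  haveI := hC.1; haveI := hC.2.1; haveI := hC.2.2
  set φ : A →* B × C := i.prod f⁻¹ with hφ
  have hφa : ∀ a : A, φ a = (i a, (f a)⁻¹) := fun a => rfl
  have hjemb : IsClosedEmbedding (Prod.map ⇑i (id : C → C)) := by
    refine ⟨hi.toIsEmbedding.prodMap Topology.IsEmbedding.id, ?_⟩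
    rw [Set.range_prodMap, Set.range_id]
    exact hi.isClosed_range.prod isClosed_univ
  set N : Subgroup (B × C) := φ.range with hN
  have hNset : (N : Set (B × C)) = Prod.map ⇑i id '' {x : A × C | f x.1 * x.2 = 1} := by
    ext ⟨b, c⟩
    constructor
    · rintro ⟨a, ha⟩
      refine ⟨(a, (f a)⁻¹), by simp, ?_⟩
      rw [← ha, hφa]
      rfl
    · rintro ⟨⟨a, c0⟩, hc, heq⟩
      refine ⟨a, ?_⟩
      rw [← heq, hφa]
      have : (f a)⁻¹ = c0 := inv_eq_of_mul_eq_one_right hc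
      rw [this]
      rfl
  have hNclosed : IsClosed (N : Set (B × C)) := by
    rw [hNset]
    exact hjemb.isClosedMap _
      (isClosed_eq ((hf.comp continuous_fst).mul continuous_snd) continuous_const)
  haveI : IsClosed ((N : Subgroup (B × C)) : Set (B × C)) := hNclosed
  refine ⟨(B × C) ⧸ N, inferInstance, inferInstance,
    ⟨inferInstance, inferInstance, inferInstance⟩, ?_⟩
  set q : B × C →* (B × C) ⧸ N := QuotientGroup.mk' N with hq
  have hqcont : Continuous q := continuous_quot_mk
  set i' : C →* (B × C) ⧸ N := q.comp (MonoidHom.inr B C) with hi'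
  set f' : B →* (B × C) ⧸ N := q.comp (MonoidHom.inl B C) with hf'
  have hi'c : ∀ c : C, i' c = QuotientGroup.mk ((1 : B), c) := fun c => rfl
  have hci' : Continuous ⇑i' := hqcont.comp (continuous_const.prodMk continuous_id)
  have hcf' : Continuous ⇑f' := hqcont.comp (continuous_id.prodMk continuous_const)
  have hinj : Function.Injective ⇑i' := by
    refine (injective_iff_map_eq_one i').mpr ?_
    intro c hc
    obtain ⟨a, ha⟩ := (QuotientGroup.eq_one_iff (((1 : B), c) : B × C)).mp hc
    rw [hφa] at ha
    have ha1 : i a = 1 := congrArg Prod.fst ha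
    have ha2 : (f a)⁻¹ = c := congrArg Prod.snd ha
    have ha0 : a = 1 := hi.injective (by rw [ha1, map_one])
    rw [← ha2, ha0]
    simp
  have key : ∀ U : Set C, IsOpen U → ∃ V : Set ((B × C) ⧸ N), IsOpen V ∧ ⇑i' ⁻¹' V = U := by
    intro U hU
    have hS' : IsOpen {x : A × C | f x.1 * x.2 ∈ U} :=
      hU.preimage ((hf.comp continuous_fst).mul continuous_snd)
    obtain ⟨W, hWopen, hWpre⟩ := hjemb.isOpen_iff.mp hS'
    refine ⟨QuotientGroup.mk '' W, QuotientGroup.isOpenMap_coe W hWopen, ?_⟩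
    ext c
    simp only [Set.mem_preimage, Set.mem_image, hi'c]
    constructor
    · rintro ⟨⟨b, c'⟩, hbc, heq⟩
      obtain ⟨a, ha⟩ := QuotientGroup.eq.mp heq
      rw [hφa] at ha
      have ha1 : i a = b⁻¹ := by simpa using congrArg Prod.fst ha
      have ha2 : (f a)⁻¹ = c'⁻¹ * c := by simpa using congrArg Prod.snd ha
      have hb : b = i a⁻¹ := by rw [map_inv, ha1, inv_inv]
      have hcc : c = c' * (f a)⁻¹ := inv_mul_eq_iff_eq_mul.mp ha2.symm
      have hc' : c' = c * f a := by rw [hcc, mul_assoc, inv_mul_cancel, mul_one]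
      have hmem : ((a⁻¹ : A), c * f a) ∈ Prod.map ⇑i id ⁻¹' W := by
        simp only [Set.mem_preimage, Prod.map]
        rw [← hb, ← hc']
        simpa using hbc
      rw [hWpre] at hmem
      have h2 : f a⁻¹ * (c * f a) ∈ U := hmem
      have h3 : f a⁻¹ * (c * f a) = c := by
        rw [map_inv, mul_comm c (f a), inv_mul_cancel_left]
      rwa [h3] at h2
    · intro hcU
      refine ⟨((1 : B), c), ?_, rfl⟩
      have hmem : ((1 : A), c) ∈ Prod.map ⇑i id ⁻¹' W := by
        rw [hWpre]
        simpa using hcU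
      simpa using hmem
  have hind : IsInducing ⇑i' := by
    refine ⟨le_antisymm (continuous_iff_le_induced.mp hci') ?_⟩
    rw [TopologicalSpace.le_def]
    intro U hU
    rw [isOpen_induced_iff]
    exact key U hU
  have hclr : IsClosed (Set.range ⇑i') := by
    have h1 : Set.range ⇑i' = QuotientGroup.mk '' (Set.range ⇑i ×ˢ Set.univ) := by
      ext x
      constructor
      · rintro ⟨c, rfl⟩
        exact ⟨((1 : B), c), ⟨⟨1, map_one i⟩, trivial⟩, rfl⟩
      · rintro ⟨⟨b, c⟩, ⟨⟨a, rfl⟩, -⟩, rfl⟩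
        refine ⟨c * f a, ?_⟩
        rw [hi'c]
        refine (QuotientGroup.eq.mpr (MonoidHom.mem_range.mpr ⟨a⁻¹, ?_⟩)).symm
        rw [hφa]
        simp [Prod.ext_iff, map_inv, inv_mul_cancel_left]
    rw [h1, ← (QuotientGroup.isQuotientMap_mk N).isClosed_preimage]
    have h2 : QuotientGroup.mk ⁻¹' (QuotientGroup.mk '' (Set.range ⇑i ×ˢ Set.univ) :
        Set ((B × C) ⧸ N)) = Set.range ⇑i ×ˢ Set.univ := by
      ext ⟨b, c⟩
      constructor
      · rintro ⟨⟨b', c'⟩, ⟨⟨a', rfl⟩, -⟩, heq⟩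
        obtain ⟨a, ha⟩ := QuotientGroup.eq.mp heq.symm
        rw [hφa] at ha
        have ha1 : i a = b⁻¹ * i a' := congrArg Prod.fst ha
        have : b = i (a' * a⁻¹) := by
          rw [map_mul, map_inv, ha1, mul_inv_rev, inv_inv]
          exact (mul_inv_cancel_left _ _).symm
        exact ⟨⟨a' * a⁻¹, this.symm⟩, trivial⟩
      · rintro ⟨⟨a, rfl⟩, -⟩
        exact ⟨(i a, c), ⟨⟨a, rfl⟩, trivial⟩, rfl⟩
    rw [h2]
    exact hi.isClosed_range.prod isClosed_univ
  refine ⟨i', f', ⟨⟨hind, hinj⟩, hclr⟩, hcf', ?_, ?_⟩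
  · refine MonoidHom.ext fun a => ?_
    show QuotientGroup.mk ((1 : B), f a) = QuotientGroup.mk (i a, (1 : C))
    refine QuotientGroup.eq.mpr (MonoidHom.mem_range.mpr ⟨a, ?_⟩)
    rw [hφa]
    simp [Prod.ext_iff]
  · intro Z _ _ hZ u v hu hv hcomm
    haveI := hZ.1
    have hker : N ≤ (u.coprod v).ker := by
      rintro ⟨b, c⟩ ⟨a, ha⟩
      rw [hφa] at ha
      have ha1 : i a = b := congrArg Prod.fst ha
      have ha2 : (f a)⁻¹ = c := congrArg Prod.snd ha
      rw [MonoidHom.mem_ker, MonoidHom.coprod_apply, ← ha1, ← ha2]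
      have hcz : u (i a) = v (f a) := DFunLike.congr_fun hcomm a
      rw [map_inv, hcz, mul_inv_cancel]
    refine ⟨QuotientGroup.lift N (u.coprod v) hker, ⟨?_, ?_, ?_⟩, ?_⟩
    · refine (QuotientGroup.isQuotientMap_mk N).continuous_iff.mpr ?_
      show Continuous fun x : B × C => u.coprod v x
      simp only [MonoidHom.coprod_apply]
      exact (hu.comp continuous_fst).mul (hv.comp continuous_snd)
    · refine MonoidHom.ext fun b => ?_
      show QuotientGroup.lift N (u.coprod v) hker (QuotientGroup.mk (b, (1 : C))) = u b
      rw [QuotientGroup.lift_mk']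
      simp
    · refine MonoidHom.ext fun c => ?_
      show QuotientGroup.lift N (u.coprod v) hker (QuotientGroup.mk ((1 : B), c)) = v c
      rw [QuotientGroup.lift_mk']
      simp
    · rintro w' ⟨-, h1, h2⟩
      refine QuotientGroup.monoidHom_ext N (MonoidHom.ext fun x => ?_)
      obtain ⟨b, c⟩ := x
      have hx : ((b, c) : B × C) = (b, (1 : C)) * ((1 : B), c) := by simp
      show w' (QuotientGroup.mk (b, c)) = QuotientGroup.lift N (u.coprod v) hker
        (QuotientGroup.mk (b, c))
      rw [QuotientGroup.lift_mk', hx, QuotientGroup.mk_mul, map_mul]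
      have e1 : w' (QuotientGroup.mk ((b, (1:C)) : B × C)) = u b := DFunLike.congr_fun h1 b
      have e2 : w' (QuotientGroup.mk (((1:B), c) : B × C)) = v c := DFunLike.congr_fun h2 c
      rw [e1, e2]
      simp

end Aux


/-- The class of all kernel-cokernel pairs in the category LCA of locally compact Hausdorff
abelian groups is an exact structure on LCA:
(E1) identities are admissible monics and admissible epics;
(E2) admissible monics and admissible epics are closed under composition;
(E3) the pushout of an admissible monic along any morphism exists and is an admissible monic;
(E4) the pullback of an admissible epic along any morphism exists and is an admissible epic. -/
theorem stmt16 :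
    -- E1
    (∀ (A : Type u) (_ : CommGroup A) (_ : TopologicalSpace A), IsLCAGroup A →
      AdmMonic (MonoidHom.id A) ∧ AdmEpic (MonoidHom.id A)) ∧
    -- E2
    (∀ (A B C : Type u) (_ : CommGroup A) (_ : TopologicalSpace A) (_ : CommGroup B)
        (_ : TopologicalSpace B) (_ : CommGroup C) (_ : TopologicalSpace C),
      IsLCAGroup A → IsLCAGroup B → IsLCAGroup C →
      ∀ (f : A →* B) (g : B →* C),
        (AdmMonic f → AdmMonic g → AdmMonic (g.comp f)) ∧
        (AdmEpic f → AdmEpic g → AdmEpic (g.comp f))) ∧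
    -- E3: pushouts of admissible monics exist and are admissible monics
    (∀ (A B C : Type u) (_ : CommGroup A) (_ : TopologicalSpace A) (_ : CommGroup B)
        (_ : TopologicalSpace B) (_ : CommGroup C) (_ : TopologicalSpace C),
      IsLCAGroup A → IsLCAGroup B → IsLCAGroup C →
      ∀ (i : A →* B) (f : A →* C), AdmMonic i → Continuous f →
        ∃ (D : Type u) (_ : CommGroup D) (_ : TopologicalSpace D), IsLCAGroup D ∧
          ∃ (i' : C →* D) (f' : B →* D),
            AdmMonic i' ∧ Continuous f' ∧ i'.comp f = f'.comp i ∧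
            ∀ (Z : Type u) (_ : CommGroup Z) (_ : TopologicalSpace Z), IsLCAGroup Z →
              ∀ (u : B →* Z) (v : C →* Z), Continuous u → Continuous v →
                u.comp i = v.comp f →
                ∃! w : D →* Z, Continuous w ∧ w.comp f' = u ∧ w.comp i' = v) ∧
    -- E4: pullbacks of admissible epics exist and are admissible epics
    (∀ (A B C : Type u) (_ : CommGroup A) (_ : TopologicalSpace A) (_ : CommGroup B)
        (_ : TopologicalSpace B) (_ : CommGroup C) (_ : TopologicalSpace C),
      IsLCAGroup A → IsLCAGroup B → IsLCAGroup C →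
      ∀ (p : A →* B) (f : C →* B), AdmEpic p → Continuous f →
        ∃ (D : Type u) (_ : CommGroup D) (_ : TopologicalSpace D), IsLCAGroup D ∧
          ∃ (p' : D →* C) (f' : D →* A),
            AdmEpic p' ∧ Continuous f' ∧ p.comp f' = f.comp p' ∧
            ∀ (Z : Type u) (_ : CommGroup Z) (_ : TopologicalSpace Z), IsLCAGroup Z →
              ∀ (u : Z →* A) (v : Z →* C), Continuous u → Continuous v →
                p.comp u = f.comp v →
                ∃! w : Z →* D, Continuous w ∧ f'.comp w = u ∧ p'.comp w = v) := by
  refine ⟨?_, ?_, ?_, ?_⟩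
  · intro A _ _ _
    exact ⟨IsClosedEmbedding.id, continuous_id, surjective_id, IsOpenMap.id⟩
  · intro A B C _ _ _ _ _ _ _ _ _ f g
    constructor
    · intro hf hg
      exact hg.comp hf
    · intro hf hg
      exact ⟨hg.1.comp hf.1, hg.2.1.comp hf.2.1, hg.2.2.comp hf.2.2⟩
  · intro A B C _ _ _ _ _ _ hA hB hC i f hi hf
    exact pushout_aux hA hB hC i f hi hf
  · intro A B C _ _ _ _ _ _ hA hB hC p f hp hf
    exact pullback_aux hA hB hC p f hp hf
end

section
/- Let k be a field of characteristic ≠ 2, and consider the formal residue Res: k((t))dt → k sending Σ cᵢtⁱdt ↦ c₋₁. Let ω = Σ_{i≥0} c_i t^{ordω + i} dt be a nonzero element of k((t))dt with c₀ ≠ 0. If ord ω = 2d is even, then the k-bilinear pairing (f,g) ↦ Res(fgω) on k((t)) restricts so that the annihilator of t^{−d}k[[t]] with respect to this pairing is exactly t^{−d}k[[t]] itself. -/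
open scoped Classical

/-- The formal residue `Res : k((t))dt → k`, sending `Σ cᵢ tⁱ dt ↦ c₋₁`.
Here a differential `f dt` is identified with the Laurent series `f`. -/
noncomputable def formalRes {k : Type*} [Field k] (f : LaurentSeries k) : k :=
  f.coeff (-1)

/-- The subspace `t^(-d) k[[t]]` of `k((t))`. -/
def tPowInt {k : Type*} [Field k] (d : ℤ) : Set (LaurentSeries k) :=
  {f | ∀ n : ℤ, n < -d → f.coeff n = 0}

/-- If all coefficients of `f` below `A` and of `g` below `B` vanish, then all
coefficients of `f * g` below `A + B` vanish. -/
lemma mul_coeff_eq_zero_aux {k : Type*} [Field k] {f g : LaurentSeries k} {A B n : ℤ}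
    (hf : ∀ m : ℤ, m < A → f.coeff m = 0) (hg : ∀ m : ℤ, m < B → g.coeff m = 0)
    (hn : n < A + B) : (f * g).coeff n = 0 := by
  rw [HahnSeries.coeff_mul]
  refine Finset.sum_eq_zero fun ij hij => ?_
  rw [Finset.mem_addAntidiagonal] at hij
  rcases lt_or_ge ij.1 A with h | h
  · rw [hf _ h, zero_mul]
  · have : ij.2 < B := by omega
    rw [hg _ this, mul_zero]

/-- Let `k` be a field of characteristic ≠ 2 and `ω = Σ_{i ≥ 0} c_i t^(ord ω + i) dt` a nonzero
element of `k((t))dt`.  If `ord ω = 2d` is even, then the annihilator of `t^(-d) k[[t]]` with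
respect to the pairing `(f, g) ↦ Res (f g ω)` is exactly `t^(-d) k[[t]]`. -/
theorem stmt17 {k : Type*} [Field k] (h2 : (2 : k) ≠ 0)
    (ω : LaurentSeries k) (hω : ω ≠ 0) (d : ℤ) (hord : ω.order = 2 * d) :
    {f : LaurentSeries k | ∀ g ∈ tPowInt (k := k) d, formalRes (f * g * ω) = 0}
      = tPowInt (k := k) d := by
  have hωc : ∀ m : ℤ, m < 2 * d → ω.coeff m = 0 := fun m hm =>
    HahnSeries.coeff_eq_zero_of_lt_order (hord ▸ hm)
  ext f
  simp only [Set.mem_setOf_eq]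
  constructor
  · intro hf
    intro n hn
    by_contra hfn
    -- f ≠ 0 and its order is at most n < -d
    have hf0 : f ≠ 0 := fun h => hfn (by simp [h])
    have hordle : f.order ≤ n := HahnSeries.order_le_of_coeff_ne_zero hfn
    have hfo : f.order < -d := lt_of_le_of_lt hordle hn
    set m : ℤ := -1 - f.order - 2 * d with hm
    have hg : (HahnSeries.single m (1 : k) : LaurentSeries k) ∈ tPowInt (k := k) d := by
      intro j hj
      have : j ≠ m := by omega
      exact HahnSeries.coeff_single_of_ne this
    have := hf _ hg
    rw [formalRes, mul_right_comm] at this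
    have heq : (-1 : ℤ) = (f.order + 2 * d) + m := by omega
    rw [heq, HahnSeries.coeff_mul_single_add, mul_one, ← hord,
      HahnSeries.coeff_mul_order_add_order] at this
    exact (mul_ne_zero (HahnSeries.leadingCoeff_ne_zero.2 hf0)
      (HahnSeries.leadingCoeff_ne_zero.2 hω)) this
  · intro hf g hg
    have hfg : ∀ m : ℤ, m < -(2 * d) → (f * g).coeff m = 0 := by
      intro m hm
      exact mul_coeff_eq_zero_aux hf hg (by omega)
    have : (f * g * ω).coeff (-1) = 0 :=
      mul_coeff_eq_zero_aux hfg hωc (by omega)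
    exact this
end
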